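/- For a distribution p = (p₁,…,pₙ) with n > 1, the expected number of fair bits consumed by any DDG-tree sampler with output distribution p is at least H(p), the Shannon entropy of p. -/

import Mathlib

set_option maxHeartbeats 1000000


open scoped ENNReal

/-- entropy lower bound for DDG-tree samplers. A (possibly infinite)
DDG tree over outcomes `{1,…,n}` is represented by its set of leaves: a prefix-free
assignment `leafSet : List Bool → Option (Fin n)` marking which nodes (bit-string
paths from the root) are leaves and the outcome labeling each. If the random walk
driven by fair bits halts at a leaf with probability one, then the expected number
of consumed bits `E[L_T] = Σ_leaves depth·2^{-depth}` is at least the Shannon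
entropy `H(p) = Σᵢ pᵢ log₂(1/pᵢ)` of the output distribution
`pᵢ = Σ_{leaves labeled i} 2^{-depth}`. -/
theorem stmt_18 (n : ℕ) (hn : 1 < n) (leafSet : List Bool → Option (Fin n))
    (hprefix : ∀ s t : List Bool, (leafSet s).isSome → s <+: t → s ≠ t →
      leafSet t = none)
    (hhalt : (∑' s : {s : List Bool // (leafSet s).isSome},
      ((1 : ℝ) / 2) ^ (s.1.length)) = 1) :
    let p : Fin n → ℝ := fun i =>
      ∑' s : {s : List Bool // leafSet s = some i}, ((1 : ℝ) / 2) ^ (s.1.length)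
    ENNReal.ofReal (∑ i : Fin n, p i * Real.logb 2 (p i)⁻¹) ≤
      ∑' s : {s : List Bool // (leafSet s).isSome},
        (s.1.length : ℝ≥0∞) * ((1 : ℝ≥0∞) / 2) ^ (s.1.length) := by
  intro p
  -- summability of the leaf weights
  have hf : Summable (fun s : {s : List Bool // (leafSet s).isSome} =>
      ((1 : ℝ) / 2) ^ s.1.length) := by
    by_contra h
    rw [tsum_eq_zero_of_not_summable h] at hhalt
    norm_num at hhalt
  by_cases hT : (∑' s : {s : List Bool // (leafSet s).isSome},
      (s.1.length : ℝ≥0∞) * ((1 : ℝ≥0∞) / 2) ^ (s.1.length)) = ⊤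
  · rw [hT]; exact le_top
  have htoReal : ∀ s : {s : List Bool // (leafSet s).isSome},
      (((s.1.length : ℝ≥0∞) * ((1 : ℝ≥0∞) / 2) ^ (s.1.length))).toReal
        = (s.1.length : ℝ) * ((1 : ℝ) / 2) ^ s.1.length := by
    intro s
    simp [ENNReal.toReal_mul, ENNReal.toReal_pow, ENNReal.toReal_div]
  have hg : Summable (fun s : {s : List Bool // (leafSet s).isSome} =>
      (s.1.length : ℝ) * ((1 : ℝ) / 2) ^ s.1.length) := by
    have := ENNReal.summable_toReal hT
    simpa [htoReal] using this
  have hRtoReal : (∑' s : {s : List Bool // (leafSet s).isSome},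
      (s.1.length : ℝ≥0∞) * ((1 : ℝ≥0∞) / 2) ^ (s.1.length)).toReal
      = ∑' s : {s : List Bool // (leafSet s).isSome},
        (s.1.length : ℝ) * ((1 : ℝ) / 2) ^ s.1.length := by
    rw [ENNReal.tsum_toReal_eq]
    · exact tsum_congr htoReal
    · intro a
      exact ENNReal.mul_ne_top (ENNReal.natCast_ne_top _)
        (ENNReal.pow_ne_top (by norm_num))
  rw [← ENNReal.ofReal_toReal hT]
  apply ENNReal.ofReal_le_ofReal
  rw [hRtoReal]
  -- per-label inequality
  have key : ∀ i : Fin n, p i * Real.logb 2 (p i)⁻¹ ≤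
      ∑' s : {s : List Bool // leafSet s = some i},
        (s.1.length : ℝ) * ((1 : ℝ) / 2) ^ s.1.length := by
    intro i
    have einj : Function.Injective (fun s : {s : List Bool // leafSet s = some i} =>
        (⟨s.1, by simp [s.2]⟩ : {s : List Bool // (leafSet s).isSome})) := by
      intro a b hab
      simp only [Subtype.mk.injEq] at hab
      exact Subtype.ext hab
    have hfi : Summable (fun s : {s : List Bool // leafSet s = some i} =>
        ((1 : ℝ) / 2) ^ s.1.length) := by
      have h2 := hf.comp_injective einj
      simpa [Function.comp_def] using h2
    have hgi : Summable (fun s : {s : List Bool // leafSet s = some i} =>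
        (s.1.length : ℝ) * ((1 : ℝ) / 2) ^ s.1.length) := by
      have h2 := hg.comp_injective einj
      simpa [Function.comp_def] using h2
    have hterm : ∀ s : {s : List Bool // leafSet s = some i},
        ((1 : ℝ) / 2) ^ s.1.length ≤ p i := by
      intro s
      exact Summable.le_tsum hfi s (fun j _ => by positivity)
    have hc : ∀ s : {s : List Bool // leafSet s = some i},
        Real.logb 2 (p i)⁻¹ ≤ (s.1.length : ℝ) := by
      intro s
      have h1 : (0 : ℝ) < ((1 : ℝ) / 2) ^ s.1.length := by positivity
      have h2 := hterm s
      have hlog : Real.logb 2 (((1 : ℝ) / 2) ^ s.1.length) ≤ Real.logb 2 (p i) :=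
        Real.logb_le_logb_of_le (by norm_num) h1 h2
      have hval : Real.logb 2 (((1 : ℝ) / 2) ^ s.1.length)
          = -(s.1.length : ℝ) := by
        have hhalf : Real.logb 2 ((1:ℝ)/2) = -1 := by
          rw [one_div, Real.logb_inv, Real.logb_self_eq_one] <;> norm_num
        rw [Real.logb_pow, hhalf]
        ring
      rw [Real.logb_inv]
      linarith
    calc p i * Real.logb 2 (p i)⁻¹
        = ∑' s : {s : List Bool // leafSet s = some i},
            ((1 : ℝ) / 2) ^ s.1.length * Real.logb 2 (p i)⁻¹ := by
          rw [tsum_mul_right]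
      _ ≤ ∑' s : {s : List Bool // leafSet s = some i},
            (s.1.length : ℝ) * ((1 : ℝ) / 2) ^ s.1.length := by
          apply Summable.tsum_le_tsum _ (hfi.mul_right _) hgi
          intro s
          rw [mul_comm ((s.1.length : ℝ))]
          exact mul_le_mul_of_nonneg_left (hc s) (by positivity)
  refine le_trans (Finset.sum_le_sum (fun i _ => key i)) ?_
  -- partition of leaves by label
  have Finj : Function.Injective
      (fun x : Σ i : Fin n, {s : List Bool // leafSet s = some i} =>
        (⟨x.2.1, Option.isSome_iff_exists.2 ⟨x.1, x.2.2⟩⟩ :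
          {s : List Bool // (leafSet s).isSome})) := by
    rintro ⟨i, a, ha⟩ ⟨j, b, hb⟩ h
    simp only [Subtype.mk.injEq] at h
    subst h
    have hij : i = j := Option.some_injective _ (ha.symm.trans hb)
    subst hij
    rfl
  have Fsurj : Function.Surjective
      (fun x : Σ i : Fin n, {s : List Bool // leafSet s = some i} =>
        (⟨x.2.1, Option.isSome_iff_exists.2 ⟨x.1, x.2.2⟩⟩ :
          {s : List Bool // (leafSet s).isSome})) := by
    rintro ⟨s, hs⟩
    obtain ⟨i, hi⟩ := Option.isSome_iff_exists.1 hs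
    exact ⟨⟨i, ⟨s, hi⟩⟩, rfl⟩
  have hgE : Summable (fun x : Σ i : Fin n, {s : List Bool // leafSet s = some i} =>
      (x.2.1.length : ℝ) * ((1 : ℝ) / 2) ^ x.2.1.length) := by
    have h2 := hg.comp_injective Finj
    simpa [Function.comp_def] using h2
  have hgEi : ∀ i : Fin n, Summable (fun s : {s : List Bool // leafSet s = some i} =>
      (s.1.length : ℝ) * ((1 : ℝ) / 2) ^ s.1.length) := by
    intro i
    have h2 := hgE.comp_injective (sigma_mk_injective (i := i))
    simpa [Function.comp_def] using h2
  have hsigma : (∑' x : Σ i : Fin n, {s : List Bool // leafSet s = some i},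
        (x.2.1.length : ℝ) * ((1 : ℝ) / 2) ^ x.2.1.length)
      = ∑' i : Fin n, ∑' s : {s : List Bool // leafSet s = some i},
        (s.1.length : ℝ) * ((1 : ℝ) / 2) ^ s.1.length := by
    exact Summable.tsum_sigma' (fun i => hgEi i) hgE
  have hEtsum : (∑' x : Σ i : Fin n, {s : List Bool // leafSet s = some i},
        (x.2.1.length : ℝ) * ((1 : ℝ) / 2) ^ x.2.1.length)
      = ∑' s : {s : List Bool // (leafSet s).isSome},
        (s.1.length : ℝ) * ((1 : ℝ) / 2) ^ s.1.length := by
    have h2 := (Equiv.ofBijective _ ⟨Finj, Fsurj⟩).tsum_eq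
      (fun s : {s : List Bool // (leafSet s).isSome} =>
        (s.1.length : ℝ) * ((1 : ℝ) / 2) ^ s.1.length)
    simpa [Equiv.ofBijective] using h2
  rw [← tsum_fintype (L := SummationFilter.unconditional _), ← hsigma, hEtsum]
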